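/- Let t = (t₁,…,t_s), c = (c₁,…,c_s) and t′ = (t′₁,…,t′_r), c′ = (c′₁,…,c′_r) be sequences of positive integers with r < s, Σ t_i = Σ t′_j = n, c_i ≤ t_i and c′_j ≤ t′_j for all indices. Suppose there exist pairwise disjoint sets S₁,…,S_r ⊆ {1,…,s} with t′_j = Σ_{i ∈ S_j} t_i and c′_j = Σ_{i ∈ S_j} c_i for all j, and at least one S_j has more than one element. Then (1/n) Σ_{i=1}^{s} t_i log₂ c_i < (1/n) Σ_{j=1}^{r} t′_j log₂ c′_j; i.e., amalgamating components strictly increases the asymptotic iteration entropy. -/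

import Mathlib

open scoped Classical

/-- `itN f k x y` counts the iterates `j < k` with `f^[j] x = y`. -/
noncomputable def itN {X : Type*} (f : X → X) (k : ℕ) (x y : X) : ℕ :=
  ((Finset.range k).filter (fun j => f^[j] x = y)).card

/-- The (shifted) iteration entropy `H_{f,k}`. -/
noncomputable def itH (X : Type*) [Fintype X] (f : X → X) (k : ℕ) : ℝ :=
  (1 / ((k : ℝ) * (Fintype.card X : ℝ))) *
    ∑ x : X, ∑ y : X, (itN f k x y : ℝ) * Real.logb 2 ((k : ℝ) / (itN f k x y : ℝ))

theorem amalgamation_increases_entropy (s r n : ℕ) (hrs : r < s)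
    (t c : Fin s → ℕ) (t' c' : Fin r → ℕ)
    (ht : ∀ i, 1 ≤ t i) (hc : ∀ i, 1 ≤ c i) (hct : ∀ i, c i ≤ t i)
    (ht' : ∀ j, 1 ≤ t' j) (hc' : ∀ j, 1 ≤ c' j) (hct' : ∀ j, c' j ≤ t' j)
    (hsum : ∑ i, t i = n) (hsum' : ∑ j, t' j = n)
    (S : Fin r → Finset (Fin s))
    (hdisj : ∀ j₁ j₂, j₁ ≠ j₂ → Disjoint (S j₁) (S j₂))
    (hts : ∀ j, t' j = ∑ i ∈ S j, t i) (hcs : ∀ j, c' j = ∑ i ∈ S j, c i)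
    (hbig : ∃ j, 1 < (S j).card) :
    (1 / (n : ℝ)) * ∑ i, (t i : ℝ) * Real.logb 2 (c i) <
      (1 / (n : ℝ)) * ∑ j, (t' j : ℝ) * Real.logb 2 (c' j) := by
  have hspos : 0 < s := lt_of_le_of_lt (Nat.zero_le r) hrs
  have hn : 0 < n := by
    have h1 : s ≤ ∑ i, t i := by
      calc s = ∑ _i : Fin s, 1 := by simp
      _ ≤ ∑ i, t i := Finset.sum_le_sum fun i _ => ht i
    omega
  have hdisj' : (((Finset.univ : Finset (Fin r)) : Set (Fin r))).PairwiseDisjoint S := by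
    intro a _ b _ hab; exact hdisj a b hab
  set B : Finset (Fin s) := Finset.univ.biUnion S with hB
  have hBsum : ∑ i ∈ B, t i = n := by
    rw [hB, Finset.sum_biUnion hdisj']
    rw [← hsum']; exact Finset.sum_congr rfl fun j _ => (hts j).symm
  have hBuniv : B = Finset.univ := by
    by_contra h
    obtain ⟨x, hx⟩ : ∃ x : Fin s, x ∉ B := by
      by_contra hx; push_neg at hx
      exact h (Finset.eq_univ_iff_forall.mpr hx)
    have : ∑ i ∈ B, t i < ∑ i ∈ Finset.univ, t i :=
      Finset.sum_lt_sum_of_subset (Finset.subset_univ _) (Finset.mem_univ x) hx (ht x)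
        (fun i _ _ => Nat.zero_le _)
    omega
  -- pointwise bounds
  have hle : ∀ j : Fin r, ∑ i ∈ S j, (t i : ℝ) * Real.logb 2 (c i)
      ≤ (t' j : ℝ) * Real.logb 2 (c' j) := by
    intro j
    calc ∑ i ∈ S j, (t i : ℝ) * Real.logb 2 (c i)
        ≤ ∑ i ∈ S j, (t i : ℝ) * Real.logb 2 (c' j) := by
          apply Finset.sum_le_sum; intro i hi
          have hci : c i ≤ c' j := by
            rw [hcs j]; exact Finset.single_le_sum (fun i _ => Nat.zero_le _) hi
          have hlog := Real.logb_le_logb_of_le (b := 2) one_lt_two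
            (show (0:ℝ) < (c i : ℝ) by exact_mod_cast hc i) (Nat.cast_le.mpr hci)
          exact mul_le_mul_of_nonneg_left hlog (by positivity)
      _ = (t' j : ℝ) * Real.logb 2 (c' j) := by
          rw [← Finset.sum_mul, hts j]; push_cast; ring
  have hlt : ∃ j : Fin r, ∑ i ∈ S j, (t i : ℝ) * Real.logb 2 (c i)
      < (t' j : ℝ) * Real.logb 2 (c' j) := by
    obtain ⟨j, hj⟩ := hbig
    refine ⟨j, ?_⟩
    have hne : (S j).Nonempty := Finset.card_pos.mp (by omega)
    have hstrict : ∀ i ∈ S j, (t i : ℝ) * Real.logb 2 (c i)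
        < (t i : ℝ) * Real.logb 2 (c' j) := by
      intro i hi
      have herase : ((S j).erase i).Nonempty := by
        rw [← Finset.card_pos, Finset.card_erase_of_mem hi]; omega
      obtain ⟨i', hi'⟩ := herase
      have hci : c i < c' j := by
        rw [hcs j, ← Finset.add_sum_erase _ _ hi]
        have : 1 ≤ ∑ x ∈ (S j).erase i, c x :=
          le_trans (hc i') (Finset.single_le_sum (fun i _ => Nat.zero_le _) hi')
        omega
      have hlog := Real.logb_lt_logb (b := 2) one_lt_two
        (show (0:ℝ) < (c i : ℝ) by exact_mod_cast hc i) (Nat.cast_lt.mpr hci)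
      exact mul_lt_mul_of_pos_left hlog (by exact_mod_cast ht i)
    calc ∑ i ∈ S j, (t i : ℝ) * Real.logb 2 (c i)
        < ∑ i ∈ S j, (t i : ℝ) * Real.logb 2 (c' j) :=
          Finset.sum_lt_sum_of_nonempty hne hstrict
      _ = (t' j : ℝ) * Real.logb 2 (c' j) := by
          rw [← Finset.sum_mul, hts j]; push_cast; ring
  have key : ∑ i, (t i : ℝ) * Real.logb 2 (c i) < ∑ j, (t' j : ℝ) * Real.logb 2 (c' j) := by
    have hL : ∑ i, (t i : ℝ) * Real.logb 2 (c i)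
        = ∑ j, ∑ i ∈ S j, (t i : ℝ) * Real.logb 2 (c i) := by
      rw [← Finset.sum_biUnion hdisj', ← hB, hBuniv]
    rw [hL]
    obtain ⟨j0, hj0⟩ := hlt
    exact Finset.sum_lt_sum (fun j _ => hle j) ⟨j0, Finset.mem_univ _, hj0⟩
  have hnpos : (0:ℝ) < 1 / n := by positivity
  exact mul_lt_mul_of_pos_left key hnpos
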